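/- Fix real numbers a < b and parameters −1 ≤ L ≤ M ≤ N and −1 ≤ L' ≤ M' ≤ N' in {−1, 0, 1, 2, …} ∪ {∞}. Then C^{L',M',N'}[a,b] ⊆ C^{L,M,N}[a,b] if and only if L ≤ L', M ≤ M', and N ≤ N'. -/

import Mathlib

noncomputable section

open Set Filter

/-- Two functions agree on `[a,b]` outside some finite set. -/
def finEq (a b : ℝ) (f g : ℝ → ℝ) : Prop :=
  ∃ E : Finset ℝ, ∀ t ∈ Set.Icc a b \ (E : Set ℝ), f t = g t

/-- The setoid on real functions: agreement on `[a,b]` off a finite set. -/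
def finSetoid (a b : ℝ) : Setoid (ℝ → ℝ) where
  r := finEq a b
  iseqv := by
    constructor
    · intro f; exact ⟨∅, fun t _ => rfl⟩
    · rintro f g ⟨E, hE⟩; exact ⟨E, fun t ht => (hE t ht).symm⟩
    · rintro f g h ⟨E1, h1⟩ ⟨E2, h2⟩
      refine ⟨E1 ∪ E2, fun t ht => ?_⟩
      have h1' : f t = g t := h1 t ⟨ht.1, fun hm => ht.2 (by simp [hm])⟩
      have h2' : g t = h t := h2 t ⟨ht.1, fun hm => ht.2 (by simp [hm])⟩
      exact h1'.trans h2'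

/-- `C^{-1}[a,b]`: classes of functions with finitely many singularities on `[a,b]`. -/
def Cm1 (a b : ℝ) : Type := Quotient (finSetoid a b)

/-- The class of a function. -/
def Cm1.mk (a b : ℝ) (f : ℝ → ℝ) : Cm1 a b := Quotient.mk (finSetoid a b) f

/-- Restriction of classes to a subinterval `[x,y] ⊆ [a,b]`. -/
def Cm1.res {a b : ℝ} (x y : ℝ) (hax : a ≤ x) (hyb : y ≤ b) (w : Cm1 a b) : Cm1 x y :=
  Quotient.liftOn w (fun f => Cm1.mk x y f) (fun f g hfg => by
    obtain ⟨E, hE⟩ := hfg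
    exact Quotient.sound ⟨E, fun t ht => hE t ⟨⟨hax.trans ht.1.1, ht.1.2.trans hyb⟩, ht.2⟩⟩)

/-- `f` is `C^L` on `s`, for `L ∈ {-1, 0, 1, …} ∪ {∞}` (coded in `WithTop ℤ`):
`f` is `C^k` on `s` for every natural `k ≤ L`; for `L = -1` no condition. -/
def contDiffReg (L : WithTop ℤ) (f : ℝ → ℝ) (s : Set ℝ) : Prop :=
  ∀ k : ℕ, ((k : ℤ) : WithTop ℤ) ≤ L → ContDiffOn ℝ k f s

/-- `C^N[a,b]` as a set of classes: those represented by a function that is `C^N`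
on all of `[a,b]`. -/
def CNclass (N : WithTop ℤ) (a b : ℝ) : Set (Cm1 a b) :=
  {w | ∃ f : ℝ → ℝ, Cm1.mk a b f = w ∧ contDiffReg N f (Set.Icc a b)}

/-- `C^N_pw[a,b]`: classes represented by a function that is `C^N` on `[a,b]` minus a
finite set. -/
def CNpw (N : WithTop ℤ) (a b : ℝ) : Set (Cm1 a b) :=
  {w | ∃ f : ℝ → ℝ, Cm1.mk a b f = w ∧
    ∃ E : Finset ℝ, contDiffReg N f (Set.Icc a b \ (E : Set ℝ))}

/-- `C^{L,M,N}[a,b]`: classes `w ∈ C^L[a,b] ∩ C^N_pw[a,b]` such that for some finite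
set `E` and every open interval `(x,y) ⊆ (a,b) \ E`, the restriction `w|[x,y]` lies in
`C^M[x,y]`. -/
def CLMN (L M N : WithTop ℤ) (a b : ℝ) : Set (Cm1 a b) :=
  {w | w ∈ CNclass L a b ∧ w ∈ CNpw N a b ∧
    ∃ E : Finset ℝ, ∀ (x y : ℝ) (hax : a ≤ x) (hyb : y ≤ b), x < y →
      Set.Ioo x y ⊆ Set.Ioo a b \ (E : Set ℝ) →
      Cm1.res x y hax hyb w ∈ CNclass M x y}



/-! ### Auxiliary lemmas -/

/-- Left endpoint is in the closure of an open interval minus a finite set. -/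
lemma aux_mem_closure_Ioo_left {u v : ℝ} (h : u < v) (F : Finset ℝ) :
    u ∈ closure (Set.Ioo u v \ (F : Set ℝ)) := by
  rw [Metric.mem_closure_iff]
  intro ε hε
  have h' : u < min v (u + ε) := lt_min h (by linarith)
  have hinf : (Set.Ioo u (min v (u + ε))).Infinite := Set.Ioo_infinite h'
  obtain ⟨t, ht⟩ := (hinf.diff (F.finite_toSet)).nonempty
  obtain ⟨⟨ht1, ht2⟩, htF⟩ := ht
  refine ⟨t, ⟨⟨ht1, ht2.trans_le (min_le_left _ _)⟩, htF⟩, ?_⟩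
  have h3 := ht2.trans_le (min_le_right _ _)
  rw [Real.dist_eq, abs_sub_comm, abs_of_pos (show (0:ℝ) < t - u by linarith)]
  linarith

/-- Right endpoint is in the closure of an open interval minus a finite set. -/
lemma aux_mem_closure_Ioo_right {u v : ℝ} (h : u < v) (F : Finset ℝ) :
    v ∈ closure (Set.Ioo u v \ (F : Set ℝ)) := by
  rw [Metric.mem_closure_iff]
  intro ε hε
  have h' : max u (v - ε) < v := max_lt h (by linarith)
  have hinf : (Set.Ioo (max u (v - ε)) v).Infinite := Set.Ioo_infinite h'
  obtain ⟨t, ht⟩ := (hinf.diff (F.finite_toSet)).nonempty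
  obtain ⟨⟨ht1, ht2⟩, htF⟩ := ht
  refine ⟨t, ⟨⟨(le_max_left _ _).trans_lt ht1, ht2⟩, htF⟩, ?_⟩
  have h3 := (le_max_right _ _).trans_lt ht1
  rw [Real.dist_eq, abs_of_pos (show (0:ℝ) < v - t by linarith)]
  linarith

lemma aux_neBot_Ioo_left {u v : ℝ} (h : u < v) (F : Finset ℝ) :
    (nhdsWithin u (Set.Ioo u v \ (F : Set ℝ))).NeBot :=
  mem_closure_iff_nhdsWithin_neBot.1 (aux_mem_closure_Ioo_left h F)

lemma aux_neBot_Ioo_right {u v : ℝ} (h : u < v) (F : Finset ℝ) :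
    (nhdsWithin v (Set.Ioo u v \ (F : Set ℝ))).NeBot :=
  mem_closure_iff_nhdsWithin_neBot.1 (aux_mem_closure_Ioo_right h F)

/-- Two functions continuous on `[x,y]` that agree off a finite set agree on `[x,y]`. -/
lemma aux_eqOn_Icc {x y : ℝ} (hxy : x < y) {f g : ℝ → ℝ}
    (hf : ContinuousOn f (Set.Icc x y)) (hg : ContinuousOn g (Set.Icc x y))
    (F : Finset ℝ) (h : Set.EqOn f g (Set.Icc x y \ (F : Set ℝ))) :
    Set.EqOn f g (Set.Icc x y) := by
  intro t ht
  rcases lt_or_eq_of_le ht.2 with hty | hty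
  · -- use interval (t, y)
    have hsub : Set.Ioo t y \ (F : Set ℝ) ⊆ Set.Icc x y \ (F : Set ℝ) := by
      intro s hs; exact ⟨⟨ht.1.trans (le_of_lt hs.1.1), le_of_lt hs.1.2⟩, hs.2⟩
    haveI := aux_neBot_Ioo_left hty F
    have hft : Filter.Tendsto f (nhdsWithin t (Set.Ioo t y \ (F : Set ℝ))) (nhds (f t)) :=
      (hf.continuousWithinAt ht).mono (fun s hs => (hsub hs).1)
    have hgt : Filter.Tendsto g (nhdsWithin t (Set.Ioo t y \ (F : Set ℝ))) (nhds (g t)) :=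
      (hg.continuousWithinAt ht).mono (fun s hs => (hsub hs).1)
    have : Filter.Tendsto f (nhdsWithin t (Set.Ioo t y \ (F : Set ℝ))) (nhds (g t)) := by
      refine hgt.congr' ?_
      filter_upwards [self_mem_nhdsWithin] with s hs
      exact (h (hsub hs)).symm
    exact tendsto_nhds_unique hft this
  · -- t = y, use interval (x, t)
    subst hty
    have hxt : x < t := hxy
    have hsub : Set.Ioo x t \ (F : Set ℝ) ⊆ Set.Icc x t \ (F : Set ℝ) := by
      intro s hs; exact ⟨⟨le_of_lt hs.1.1, le_of_lt hs.1.2⟩, hs.2⟩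
    haveI := aux_neBot_Ioo_right hxt F
    have hft : Filter.Tendsto f (nhdsWithin t (Set.Ioo x t \ (F : Set ℝ))) (nhds (f t)) :=
      (hf.continuousWithinAt ht).mono (fun s hs => (hsub hs).1)
    have hgt : Filter.Tendsto g (nhdsWithin t (Set.Ioo x t \ (F : Set ℝ))) (nhds (g t)) :=
      (hg.continuousWithinAt ht).mono (fun s hs => (hsub hs).1)
    have : Filter.Tendsto f (nhdsWithin t (Set.Ioo x t \ (F : Set ℝ))) (nhds (g t)) := by
      refine hgt.congr' ?_
      filter_upwards [self_mem_nhdsWithin] with s hs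
      exact (h (hsub hs)).symm
    exact tendsto_nhds_unique hft this

/-- Same on an open interval. -/
lemma aux_eqOn_Ioo {x y : ℝ} {f g : ℝ → ℝ}
    (hf : ContinuousOn f (Set.Ioo x y)) (hg : ContinuousOn g (Set.Ioo x y))
    (F : Finset ℝ) (h : Set.EqOn f g (Set.Ioo x y \ (F : Set ℝ))) :
    Set.EqOn f g (Set.Ioo x y) := by
  intro t ht
  have hsub : Set.Ioo t y \ (F : Set ℝ) ⊆ Set.Ioo x y \ (F : Set ℝ) := by
    intro s hs; exact ⟨⟨ht.1.trans hs.1.1, hs.1.2⟩, hs.2⟩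
  haveI := aux_neBot_Ioo_left ht.2 F
  have hft : Filter.Tendsto f (nhdsWithin t (Set.Ioo t y \ (F : Set ℝ))) (nhds (f t)) :=
    (hf.continuousWithinAt ht).mono (fun s hs => (hsub hs).1)
  have hgt : Filter.Tendsto g (nhdsWithin t (Set.Ioo t y \ (F : Set ℝ))) (nhds (g t)) :=
    (hg.continuousWithinAt ht).mono (fun s hs => (hsub hs).1)
  have : Filter.Tendsto f (nhdsWithin t (Set.Ioo t y \ (F : Set ℝ))) (nhds (g t)) := by
    refine hgt.congr' ?_
    filter_upwards [self_mem_nhdsWithin] with s hs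
    exact (h (hsub hs)).symm
  exact tendsto_nhds_unique hft this

/-- Gap to the right of `x` avoiding a finite set. -/
lemma aux_right_gap (G : Finset ℝ) {x v : ℝ} (hxv : x < v) :
    ∃ w, x < w ∧ w ≤ v ∧ ∀ t ∈ Set.Ioo x w, t ∉ (G : Set ℝ) := by
  classical
  set T : Finset ℝ := insert v (G.filter (fun t => x < t)) with hT
  have hne : T.Nonempty := ⟨v, by simp [hT]⟩
  refine ⟨T.min' hne, ?_, ?_, ?_⟩
  · rw [Finset.lt_min'_iff]
    intro t ht
    rcases Finset.mem_insert.1 ht with rfl | ht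
    · exact hxv
    · exact (Finset.mem_filter.1 ht).2
  · exact Finset.min'_le _ _ (by simp [hT])
  · intro t ht hG
    have : t ∈ T := Finset.mem_insert_of_mem (Finset.mem_filter.2 ⟨hG, ht.1⟩)
    exact absurd (Finset.min'_le _ _ this) (not_le.2 ht.2)

/-- Gap to the left of `x` avoiding a finite set. -/
lemma aux_left_gap (G : Finset ℝ) {x v : ℝ} (hvx : v < x) :
    ∃ w, w < x ∧ v ≤ w ∧ ∀ t ∈ Set.Ioo w x, t ∉ (G : Set ℝ) := by
  classical
  set T : Finset ℝ := insert v (G.filter (fun t => t < x)) with hT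
  have hne : T.Nonempty := ⟨v, by simp [hT]⟩
  refine ⟨T.max' hne, ?_, ?_, ?_⟩
  · rw [Finset.max'_lt_iff]
    intro t ht
    rcases Finset.mem_insert.1 ht with rfl | ht
    · exact hvx
    · exact (Finset.mem_filter.1 ht).2
  · exact Finset.le_max' _ _ (by simp [hT])
  · intro t ht hG
    have : t ∈ T := Finset.mem_insert_of_mem (Finset.mem_filter.2 ⟨hG, ht.2⟩)
    exact absurd (Finset.le_max' _ _ this) (not_le.2 ht.1)

/-! ### WithTop ℤ lemmas -/

lemma aux_neg_one_eq : (-1 : WithTop ℤ) = ((-1 : ℤ) : WithTop ℤ) := rfl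

lemma aux_wt_cases {X : WithTop ℤ} (hX : -1 ≤ X) :
    X = ⊤ ∨ X = ((-1 : ℤ) : WithTop ℤ) ∨ ∃ m : ℕ, X = ((m : ℤ) : WithTop ℤ) := by
  rcases X with _ | x
  · exact Or.inl rfl
  · right
    rw [aux_neg_one_eq] at hX
    have hx : (-1 : ℤ) ≤ x := WithTop.coe_le_coe.mp hX
    rcases eq_or_lt_of_le hx with h | h
    · exact Or.inl (congrArg _ h.symm)
    · refine Or.inr ⟨x.toNat, ?_⟩
      have h0 : (0:ℤ) ≤ x := by omega
      rw [Int.toNat_of_nonneg h0]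
      rfl

lemma aux_wt_succ_le {l : ℤ} {L : WithTop ℤ} (h : ((l : ℤ) : WithTop ℤ) < L) :
    ((l + 1 : ℤ) : WithTop ℤ) ≤ L := by
  rcases L with _ | x
  · exact le_top
  · have hlx : l < x := WithTop.coe_lt_coe.mp h
    exact WithTop.coe_le_coe.mpr (by omega)

/-! ### Basic lemmas about the defined structures -/

lemma mk_eq_mk_iff {a b : ℝ} {f g : ℝ → ℝ} :
    Cm1.mk a b f = Cm1.mk a b g ↔ finEq a b f g := by
  exact ⟨fun h => Quotient.exact h, fun h => Quotient.sound h⟩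

lemma res_mk {a b x y : ℝ} (hax : a ≤ x) (hyb : y ≤ b) (f : ℝ → ℝ) :
    Cm1.res x y hax hyb (Cm1.mk a b f) = Cm1.mk x y f := rfl

lemma contDiffReg_mono {R R' : WithTop ℤ} (h : R ≤ R') {f : ℝ → ℝ} {s : Set ℝ}
    (hf : contDiffReg R' f s) : contDiffReg R f s :=
  fun k hk => hf k (hk.trans h)

lemma CNclass_anti {R R' : WithTop ℤ} (h : R ≤ R') (a b : ℝ) :
    CNclass R' a b ⊆ CNclass R a b := by
  rintro w ⟨f, hf, hreg⟩
  exact ⟨f, hf, contDiffReg_mono h hreg⟩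

lemma CNpw_anti {R R' : WithTop ℤ} (h : R ≤ R') (a b : ℝ) :
    CNpw R' a b ⊆ CNpw R a b := by
  rintro w ⟨f, hf, E, hreg⟩
  exact ⟨f, hf, E, contDiffReg_mono h hreg⟩

lemma CLMN_anti {L M N L' M' N' : WithTop ℤ} (hL : L ≤ L') (hM : M ≤ M') (hN : N ≤ N')
    (a b : ℝ) : CLMN L' M' N' a b ⊆ CLMN L M N a b := by
  rintro w ⟨h1, h2, E, hE⟩
  exact ⟨CNclass_anti hL a b h1, CNpw_anti hN a b h2, E,
    fun x y hax hyb hxy hsub => CNclass_anti hM x y (hE x y hax hyb hxy hsub)⟩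

/-- `C^{-1}` classes: everything. -/
lemma mem_CNclass_neg_one {a b : ℝ} (w : Cm1 a b) :
    w ∈ CNclass ((-1 : ℤ) : WithTop ℤ) a b := by
  obtain ⟨f, rfl⟩ := Quotient.exists_rep w
  refine ⟨f, rfl, fun k hk => ?_⟩
  exfalso
  have h0 : ((0 : ℤ) : WithTop ℤ) ≤ ((k : ℤ) : WithTop ℤ) := by exact_mod_cast Int.ofNat_nonneg k
  have := h0.trans hk
  exact absurd this (by exact_mod_cast (by norm_num : ¬ ((0:ℤ) ≤ -1)))

lemma contDiffReg_of_forall {f : ℝ → ℝ} {s : Set ℝ}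
    (h : ∀ k : ℕ, ContDiffOn ℝ k f s) (R : WithTop ℤ) : contDiffReg R f s :=
  fun k _ => h k

/-- If `f` is `C^n` and `R ≤ n`, then `contDiffReg R f s`. -/
lemma contDiffReg_of_contDiff {f : ℝ → ℝ} {n : ℕ} (hf : ContDiff ℝ n f)
    {R : WithTop ℤ} (hR : R ≤ ((n : ℤ) : WithTop ℤ)) (s : Set ℝ) :
    contDiffReg R f s := by
  intro k hk
  have hkn : (k : ℤ) ≤ (n : ℤ) := by exact_mod_cast hk.trans hR
  have hkn' : k ≤ n := by exact_mod_cast hkn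
  exact (hf.of_le (by exact_mod_cast hkn')).contDiffOn
/-! ### Kink functions `(x-c)₊^j` -/

section Kink

/-- one-sided power kink -/
def kink (c : ℝ) (j : ℕ) : ℝ → ℝ := fun x => max (x - c) 0 ^ j

lemma kink_eq_zero_of_le (c : ℝ) {j : ℕ} (hj : 1 ≤ j) {x : ℝ} (hx : x ≤ c) :
    kink c j x = 0 := by
  unfold kink; rw [max_eq_right (by linarith), zero_pow (by omega)]

lemma kink_eq_pow_of_ge (c : ℝ) (j : ℕ) {x : ℝ} (hx : c ≤ x) :
    kink c j x = (x - c) ^ j := by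
  unfold kink; rw [max_eq_left (by linarith)]

lemma hasDerivAt_kink (c : ℝ) (j : ℕ) (x : ℝ) :
    HasDerivAt (kink c (j + 2)) (((j + 2 : ℕ) : ℝ) * kink c (j + 1) x) x := by
  rcases lt_trichotomy x c with h | h | h
  · have hev : kink c (j+2) =ᶠ[nhds x] fun _ => (0:ℝ) := by
      filter_upwards [Iio_mem_nhds h] with t ht
      exact kink_eq_zero_of_le c (by omega) (le_of_lt ht)
    have h0 : kink c (j+1) x = 0 := kink_eq_zero_of_le c (by omega) h.le
    rw [h0, mul_zero]
    exact (hasDerivAt_const x (0:ℝ)).congr_of_eventuallyEq hev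
  · subst h
    have hIic : HasDerivWithinAt (kink x (j+2)) 0 (Set.Iic x) x := by
      refine (hasDerivWithinAt_const x (Set.Iic x) (0:ℝ)).congr ?_ ?_
      · exact fun t ht => kink_eq_zero_of_le x (by omega) ht
      · exact kink_eq_zero_of_le x (by omega) le_rfl
    have hpoly : HasDerivAt (fun t => (t - x) ^ (j+2)) 0 x := by
      have h1 : HasDerivAt (fun t => (t - x) ^ (j+2))
          (((j+2 : ℕ):ℝ) * (x - x) ^ (j + 2 - 1) * 1) x :=
        ((hasDerivAt_id x).sub_const x).pow (j+2)
      simpa using h1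
    have hIci : HasDerivWithinAt (kink x (j+2)) 0 (Set.Ici x) x := by
      refine (hpoly.hasDerivWithinAt).congr ?_ ?_
      · exact fun t ht => kink_eq_pow_of_ge x (j+2) ht
      · exact kink_eq_pow_of_ge x (j+2) le_rfl
    have := hIic.union hIci
    rw [Set.Iic_union_Ici] at this
    have h0 : kink x (j+1) x = 0 := kink_eq_zero_of_le x (by omega) le_rfl
    rw [h0, mul_zero]
    exact hasDerivWithinAt_univ.mp this
  · have hev : kink c (j+2) =ᶠ[nhds x] fun t => (t - c) ^ (j+2) := by
      filter_upwards [Ioi_mem_nhds h] with t ht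
      exact kink_eq_pow_of_ge c (j+2) (le_of_lt ht)
    have h1 : HasDerivAt (fun t => (t - c) ^ (j+2))
        (((j+2 : ℕ):ℝ) * (x - c) ^ (j + 2 - 1) * 1) x :=
      ((hasDerivAt_id x).sub_const c).pow (j+2)
    have h2 : HasDerivAt (fun t => (t - c) ^ (j+2))
        (((j+2 : ℕ):ℝ) * kink c (j+1) x) x := by
      rw [kink_eq_pow_of_ge c (j+1) h.le]
      simpa using h1
    exact h2.congr_of_eventuallyEq hev

lemma contDiff_kink (c : ℝ) (j : ℕ) : ContDiff ℝ j (kink c (j + 1)) := by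
  induction j with
  | zero =>
      rw [show ((0:ℕ) : WithTop ℕ∞) = 0 by norm_cast]
      rw [contDiff_zero]
      exact ((continuous_id.sub continuous_const).max continuous_const).pow 1
  | succ j ih =>
      have hcast : ((j + 1 : ℕ) : WithTop ℕ∞) = (j : WithTop ℕ∞) + 1 := by push_cast; ring
      rw [hcast, contDiff_succ_iff_deriv]
      refine ⟨fun x => (hasDerivAt_kink c j x).differentiableAt, ?_, ?_⟩
      · intro h; exact absurd h (by simp)
      · have hder : deriv (kink c (j+2)) = fun x => ((j+2:ℕ):ℝ) * kink c (j+1) x :=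
          funext fun x => (hasDerivAt_kink c j x).deriv
        rw [show j + 1 + 1 = j + 2 by ring, hder]
        exact contDiff_const.mul ih

lemma contDiffAt_kink (c : ℝ) {j : ℕ} (hj : 1 ≤ j) (k : ℕ) {x : ℝ} (hx : x ≠ c) :
    ContDiffAt ℝ k (kink c j) x := by
  rcases lt_or_gt_of_ne hx with h | h
  · refine (contDiffAt_const (c := (0:ℝ))).congr_of_eventuallyEq ?_
    filter_upwards [Iio_mem_nhds h] with t ht
    exact kink_eq_zero_of_le c hj (le_of_lt ht)
  · refine (((contDiff_id.sub (contDiff_const (c := c))).pow j).contDiffAt).congr_of_eventuallyEq ?_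
    filter_upwards [Ioi_mem_nhds h] with t ht
    exact kink_eq_pow_of_ge c j (le_of_lt ht)

lemma not_contDiffOn_kink {u c v : ℝ} (hu : u < c) (hv : c < v) (m : ℕ) :
    ¬ ContDiffOn ℝ ((m + 1 : ℕ) : WithTop ℕ∞) (kink c (m + 1)) (Set.Ioo u v) := by
  induction m with
  | zero =>
      intro h
      have hmem : Set.Ioo u v ∈ nhds c := Ioo_mem_nhds hu hv
      have hdiff : DifferentiableOn ℝ (kink c 1) (Set.Ioo u v) :=
        h.differentiableOn (by simp)
      have hc : DifferentiableAt ℝ (kink c 1) c := hdiff.differentiableAt hmem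
      set d := deriv (kink c 1) c with hd
      have hda : HasDerivAt (kink c 1) d c := hc.hasDerivAt
      have h2 : HasDerivWithinAt (kink c 1) 1 (Set.Ici c) c := by
        refine (((hasDerivAt_id c).sub_const c).hasDerivWithinAt).congr ?_ ?_
        · intro t ht; rw [kink_eq_pow_of_ge c 1 ht, pow_one]; rfl
        · rw [kink_eq_pow_of_ge c 1 le_rfl, pow_one]; rfl
      have h3 : HasDerivWithinAt (kink c 1) 0 (Set.Iic c) c := by
        refine ((hasDerivWithinAt_const c (Set.Iic c) (0:ℝ))).congr ?_ ?_
        · exact fun t ht => kink_eq_zero_of_le c le_rfl ht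
        · exact kink_eq_zero_of_le c le_rfl le_rfl
      have e1 : d = 1 :=
        (uniqueDiffOn_Ici c c Set.self_mem_Ici).eq_deriv _ hda.hasDerivWithinAt h2
      have e2 : d = 0 :=
        (uniqueDiffOn_Iic c c Set.self_mem_Iic).eq_deriv _ hda.hasDerivWithinAt h3
      rw [e1] at e2
      exact one_ne_zero e2
  | succ m ih =>
      intro h
      have hcast : ((m + 2 : ℕ) : WithTop ℕ∞) = ((m + 1 : ℕ) : WithTop ℕ∞) + 1 := by
        push_cast; ring
      rw [show m + 1 + 1 = m + 2 by ring] at h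
      rw [hcast] at h
      rw [contDiffOn_succ_iff_deriv_of_isOpen isOpen_Ioo] at h
      have h3 : ContDiffOn ℝ ((m+1:ℕ) : WithTop ℕ∞) (deriv (kink c (m+2))) (Set.Ioo u v) :=
        h.2.2
      have hder : deriv (kink c (m+2)) = fun x => ((m+2:ℕ):ℝ) * kink c (m+1) x :=
        funext fun x => (hasDerivAt_kink c m x).deriv
      rw [hder] at h3
      have h4 : ContDiffOn ℝ ((m+1:ℕ) : WithTop ℕ∞)
          (fun x => (((m+2:ℕ):ℝ))⁻¹ * (((m+2:ℕ):ℝ) * kink c (m+1) x)) (Set.Ioo u v) :=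
        contDiffOn_const.mul h3
      have h5 : ContDiffOn ℝ ((m+1:ℕ) : WithTop ℕ∞) (kink c (m+1)) (Set.Ioo u v) := by
        refine h4.congr ?_
        intro x hx
        field_simp
      exact ih h5
end Kink
/-! ### Half-power kinks `(x-c)₊^p` (rpow) -/

section Rkink

/-- one-sided real-power kink -/
def rkink (c p : ℝ) : ℝ → ℝ := fun x => max (x - c) 0 ^ p

lemma rkink_eq_zero_of_le (c : ℝ) {p : ℝ} (hp : p ≠ 0) {x : ℝ} (hx : x ≤ c) :
    rkink c p x = 0 := by
  unfold rkink; rw [max_eq_right (by linarith), Real.zero_rpow hp]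

lemma rkink_eq_rpow_of_ge (c p : ℝ) {x : ℝ} (hx : c ≤ x) :
    rkink c p x = (x - c) ^ p := by
  unfold rkink; rw [max_eq_left (by linarith)]

lemma hasDerivAt_rkink (c : ℝ) {p : ℝ} (hp : 1 < p) (x : ℝ) :
    HasDerivAt (rkink c p) (p * rkink c (p - 1) x) x := by
  have hp0 : p ≠ 0 := by linarith
  have hp1 : p - 1 ≠ 0 := by intro h; apply hp.ne'; linarith
  rcases lt_trichotomy x c with h | h | h
  · have hev : rkink c p =ᶠ[nhds x] fun _ => (0:ℝ) := by
      filter_upwards [Iio_mem_nhds h] with t ht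
      exact rkink_eq_zero_of_le c hp0 (le_of_lt ht)
    rw [rkink_eq_zero_of_le c hp1 h.le, mul_zero]
    exact (hasDerivAt_const x (0:ℝ)).congr_of_eventuallyEq hev
  · subst h
    have hIic : HasDerivWithinAt (rkink x p) 0 (Set.Iic x) x := by
      refine (hasDerivWithinAt_const x (Set.Iic x) (0:ℝ)).congr ?_ ?_
      · exact fun t ht => rkink_eq_zero_of_le x hp0 ht
      · exact rkink_eq_zero_of_le x hp0 le_rfl
    have H : HasDerivAt (fun u : ℝ => u ^ p) (p * (0:ℝ) ^ (p - 1)) 0 :=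
      Real.hasDerivAt_rpow_const (Or.inr hp.le)
    have H' : HasDerivAt (fun u : ℝ => u ^ p) (p * (0:ℝ) ^ (p - 1)) (x - x) := by
      simpa using H
    have Hc : HasDerivAt (fun t => (t - x) ^ p) ((p * (0:ℝ) ^ (p-1)) * 1) x := by
      have hsub : HasDerivAt (fun t : ℝ => t - x) 1 x := (hasDerivAt_id x).sub_const x
      exact HasDerivAt.comp (h := fun t : ℝ => t - x) (h₂ := fun u : ℝ => u ^ p) x H' hsub
    have Hc0 : HasDerivAt (fun t => (t - x) ^ p) 0 x := by
      rw [Real.zero_rpow hp1] at Hc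
      simpa using Hc
    have hIci : HasDerivWithinAt (rkink x p) 0 (Set.Ici x) x := by
      refine Hc0.hasDerivWithinAt.congr ?_ ?_
      · exact fun t ht => rkink_eq_rpow_of_ge x p ht
      · exact rkink_eq_rpow_of_ge x p le_rfl
    have := hIic.union hIci
    rw [Set.Iic_union_Ici] at this
    rw [rkink_eq_zero_of_le x hp1 le_rfl, mul_zero]
    exact hasDerivWithinAt_univ.mp this
  · have hne : x - c ≠ 0 := ne_of_gt (by linarith)
    have H : HasDerivAt (fun u : ℝ => u ^ p) (p * (x - c) ^ (p - 1)) (x - c) :=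
      Real.hasDerivAt_rpow_const (Or.inl hne)
    have Hc : HasDerivAt (fun t => (t - c) ^ p) ((p * (x - c) ^ (p-1)) * 1) x := by
      have hsub : HasDerivAt (fun t : ℝ => t - c) 1 x := (hasDerivAt_id x).sub_const c
      exact HasDerivAt.comp (h := fun t : ℝ => t - c) (h₂ := fun u : ℝ => u ^ p) x H hsub
    have hev : rkink c p =ᶠ[nhds x] fun t => (t - c) ^ p := by
      filter_upwards [Ioi_mem_nhds h] with t ht
      exact rkink_eq_rpow_of_ge c p (le_of_lt ht)
    have : HasDerivAt (fun t => (t - c) ^ p) (p * rkink c (p-1) x) x := by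
      rw [rkink_eq_rpow_of_ge c (p-1) h.le]
      simpa using Hc
    exact this.congr_of_eventuallyEq hev

lemma contDiff_rkink (c : ℝ) : ∀ (m : ℕ) (p : ℝ), (m : ℝ) < p → ContDiff ℝ m (rkink c p) := by
  intro m
  induction m with
  | zero =>
      intro p hp
      rw [show ((0:ℕ) : WithTop ℕ∞) = 0 by norm_cast, contDiff_zero]
      rw [continuous_iff_continuousAt]
      intro x
      have h1 : ContinuousAt (fun u : ℝ => u ^ p) (max (x - c) 0) :=
        Real.continuousAt_rpow_const _ p (Or.inr (by exact_mod_cast hp.le))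
      have hcm : Continuous (fun x : ℝ => max (x - c) 0) :=
        (continuous_id.sub continuous_const).max continuous_const
      have h2 := ContinuousAt.comp (x := x) (f := fun x : ℝ => max (x - c) 0)
        (g := fun u : ℝ => u ^ p) h1 hcm.continuousAt
      exact h2
  | succ m ih =>
      intro p hp
      have hm1p : (1:ℝ) < p := by
        have : (0:ℝ) ≤ (m:ℝ) := Nat.cast_nonneg m
        push_cast at hp; linarith
      have hcast : ((m + 1 : ℕ) : WithTop ℕ∞) = (m : WithTop ℕ∞) + 1 := by push_cast; ring
      rw [hcast, contDiff_succ_iff_deriv]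
      refine ⟨fun x => (hasDerivAt_rkink c hm1p x).differentiableAt, ?_, ?_⟩
      · intro h; exact absurd h (by simp)
      · have hder : deriv (rkink c p) = fun x => p * rkink c (p - 1) x :=
          funext fun x => (hasDerivAt_rkink c hm1p x).deriv
        rw [hder]
        refine contDiff_const.mul (ih (p - 1) ?_)
        push_cast at hp ⊢; linarith

lemma contDiffAt_rkink (c : ℝ) {p : ℝ} (hp : 0 < p) (k : ℕ) {x : ℝ} (hx : x ≠ c) :
    ContDiffAt ℝ k (rkink c p) x := by
  rcases lt_or_gt_of_ne hx with h | h
  · refine (contDiffAt_const (c := (0:ℝ))).congr_of_eventuallyEq ?_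
    filter_upwards [Iio_mem_nhds h] with t ht
    exact rkink_eq_zero_of_le c hp.ne' (le_of_lt ht)
  · have hne : x - c ≠ 0 := ne_of_gt (by linarith)
    have h1 : ContDiffAt ℝ k (fun u : ℝ => u ^ p) (x - c) :=
      Real.contDiffAt_rpow_const_of_ne hne
    have h2 : ContDiffAt ℝ k (fun t : ℝ => t - c) x :=
      (contDiff_id.sub (contDiff_const (c := c))).contDiffAt
    refine (h1.comp x h2).congr_of_eventuallyEq ?_
    filter_upwards [Ioi_mem_nhds h] with t ht
    have := rkink_eq_rpow_of_ge c p (le_of_lt ht)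
    simpa [Function.comp] using this

lemma aux_neBot_Ioo_left' {u v : ℝ} (h : u < v) : (nhdsWithin u (Set.Ioo u v)).NeBot := by
  have := aux_neBot_Ioo_left h (∅ : Finset ℝ)
  simpa using this

lemma not_contDiffOn_rkink (c : ℝ) :
    ∀ (m : ℕ) {y : ℝ}, c < y →
      ¬ ContDiffOn ℝ ((m + 1 : ℕ) : WithTop ℕ∞) (rkink c ((m : ℝ) + 1/2)) (Set.Icc c y) := by
  intro m
  induction m with
  | zero =>
      intro y hy h
      set p : ℝ := (0:ℝ) + 1/2 with hp
      have hp0 : p ≠ 0 := by norm_num [hp]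
      have hdiff : DifferentiableOn ℝ (rkink c p) (Set.Icc c y) := by
        have := h.differentiableOn (n := 1) (by simp)
        simpa [hp] using this
      have hdwa : HasDerivWithinAt (rkink c p)
          (derivWithin (rkink c p) (Set.Icc c y) c) (Set.Icc c y) c :=
        (hdiff c (Set.left_mem_Icc.mpr hy.le)).hasDerivWithinAt
      set d := derivWithin (rkink c p) (Set.Icc c y) c with hd
      rw [hasDerivWithinAt_iff_tendsto_slope] at hdwa
      have hsub : Set.Ioo c y ⊆ Set.Icc c y \ {c} := by
        intro t ht; exact ⟨⟨ht.1.le, ht.2.le⟩, ne_of_gt ht.1⟩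
      have htd : Filter.Tendsto (slope (rkink c p) c) (nhdsWithin c (Set.Ioo c y)) (nhds d) :=
        hdwa.mono_left (nhdsWithin_mono _ hsub)
      -- slope equals (x-c)^(-1/2) on Ioo c y
      have hslope : ∀ x ∈ Set.Ioo c y,
          slope (rkink c p) c x = (x - c) ^ (-(1/2) : ℝ) := by
        intro x hx
        have hxc : (0:ℝ) < x - c := by linarith [hx.1]
        rw [slope_def_field, rkink_eq_zero_of_le c hp0 le_rfl,
          rkink_eq_rpow_of_ge c p hx.1.le]
        rw [sub_zero, div_eq_mul_inv, ← Real.rpow_neg_one (x - c), ← Real.rpow_add hxc]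
        norm_num [hp]
      -- tendsto atTop
      have h1 : Filter.Tendsto (fun x => (x - c) ^ ((1/2) : ℝ))
          (nhdsWithin c (Set.Ioo c y)) (nhdsWithin 0 (Set.Ioi 0)) := by
        rw [tendsto_nhdsWithin_iff]
        constructor
        · have hsubc : Filter.Tendsto (fun x : ℝ => x - c) (nhdsWithin c (Set.Ioo c y))
              (nhds 0) := by
            have : Filter.Tendsto (fun x : ℝ => x - c) (nhds c) (nhds (c - c)) :=
              (continuous_id.sub continuous_const).continuousAt
            simpa using this.mono_left nhdsWithin_le_nhds
          have hcont : ContinuousAt (fun u : ℝ => u ^ ((1/2):ℝ)) 0 :=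
            Real.continuousAt_rpow_const 0 _ (Or.inr (by norm_num))
          have := hcont.tendsto.comp hsubc
          rw [Real.zero_rpow (by norm_num)] at this
          exact this
        · filter_upwards [self_mem_nhdsWithin] with x hx
          exact Real.rpow_pos_of_pos (by linarith [hx.1]) _
      have h2 : Filter.Tendsto (fun x => ((x - c) ^ ((1/2) : ℝ))⁻¹)
          (nhdsWithin c (Set.Ioo c y)) Filter.atTop := Filter.Tendsto.inv_tendsto_nhdsGT_zero h1
      have h3 : Filter.Tendsto (slope (rkink c p) c)
          (nhdsWithin c (Set.Ioo c y)) Filter.atTop := by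
        refine h2.congr' ?_
        filter_upwards [self_mem_nhdsWithin] with x hx
        rw [hslope x hx, Real.rpow_neg (by linarith [hx.1])]
      haveI := aux_neBot_Ioo_left' hy
      exact not_tendsto_nhds_of_tendsto_atTop h3 d htd
  | succ m ih =>
      intro y hy h
      set p : ℝ := ((m+1 : ℕ) : ℝ) + 1/2 with hp
      have hp1 : 1 < p := by
        have : (0:ℝ) ≤ (m:ℝ) := Nat.cast_nonneg m
        rw [hp]; push_cast; linarith
      have hcast : ((m + 1 + 1 : ℕ) : WithTop ℕ∞) = ((m + 1 : ℕ) : WithTop ℕ∞) + 1 := by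
        push_cast; ring
      rw [hcast, contDiffOn_succ_iff_derivWithin (uniqueDiffOn_Icc hy)] at h
      have h2 : ContDiffOn ℝ ((m+1:ℕ) : WithTop ℕ∞)
          (derivWithin (rkink c p) (Set.Icc c y)) (Set.Icc c y) := h.2.2
      have hdw : ∀ x ∈ Set.Icc c y,
          derivWithin (rkink c p) (Set.Icc c y) x = p * rkink c (p - 1) x := by
        intro x hx
        exact ((hasDerivAt_rkink c hp1 x).hasDerivWithinAt).derivWithin
          ((uniqueDiffOn_Icc hy) x hx)
      have h3 : ContDiffOn ℝ ((m+1:ℕ) : WithTop ℕ∞)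
          (fun x => p * rkink c (p - 1) x) (Set.Icc c y) :=
        h2.congr (fun x hx => (hdw x hx).symm)
      have h4 : ContDiffOn ℝ ((m+1:ℕ) : WithTop ℕ∞)
          (fun x => p⁻¹ * (p * rkink c (p - 1) x)) (Set.Icc c y) :=
        contDiffOn_const.mul h3
      have h5 : ContDiffOn ℝ ((m+1:ℕ) : WithTop ℕ∞) (rkink c (p - 1)) (Set.Icc c y) := by
        refine h4.congr ?_
        intro x hx
        field_simp
      have hpe : p - 1 = (m : ℝ) + 1/2 := by rw [hp]; push_cast; ring
      rw [hpe] at h5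
      exact ih hy h5

end Rkink
/-! ### Staircase function with infinitely many jumps, and its primitives -/

section Stair

/-- midpoint -/
def midc (a b : ℝ) : ℝ := (a + b) / 2

/-- quarter radius -/
def srad (a b : ℝ) : ℝ := (b - a) / 4

/-- jump points accumulating at the midpoint -/
def pts (a b : ℝ) (k : ℕ) : ℝ := midc a b + srad a b / (k + 1)

/-- single step functions -/
def gj (a b : ℝ) (j : ℕ) : ℝ → ℝ := fun x => if pts a b j < x then (1/2 : ℝ)^j else 0

/-- the staircase -/
def stair (a b : ℝ) : ℝ → ℝ := fun x => ∑' j, gj a b j x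

variable {a b : ℝ}

lemma srad_pos (hab : a < b) : 0 < srad a b := by unfold srad; linarith

lemma midc_mem (hab : a < b) : a < midc a b ∧ midc a b < b := by
  unfold midc; constructor <;> linarith

lemma pts_gt (hab : a < b) (k : ℕ) : midc a b < pts a b k := by
  have h1 : (0:ℝ) < (k:ℝ) + 1 := by positivity
  have h2 := srad_pos hab
  have h3 : 0 < srad a b / ((k:ℝ)+1) := by positivity
  unfold pts; linarith

lemma pts_le (hab : a < b) (k : ℕ) : pts a b k ≤ midc a b + srad a b := by
  unfold pts
  have h1 : (1:ℝ) ≤ (k:ℝ) + 1 := by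
    have : (0:ℝ) ≤ (k:ℝ) := Nat.cast_nonneg k
    linarith
  have h2 := srad_pos hab
  have h3 : srad a b / ((k:ℝ)+1) ≤ srad a b / 1 := by
    apply div_le_div_of_nonneg_left h2.le (by norm_num) h1
  rw [div_one] at h3
  linarith

lemma pts_lt_b (hab : a < b) (k : ℕ) : pts a b k < b := by
  have h1 := pts_le hab k
  have hm : midc a b + srad a b < b := by unfold midc srad; linarith
  linarith

lemma pts_gt_a (hab : a < b) (k : ℕ) : a < pts a b k := by
  have h1 := pts_gt hab k
  have h2 := (midc_mem hab).1
  linarith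

lemma pts_strictAnti (hab : a < b) : StrictAnti (pts a b) := by
  intro k l hkl
  unfold pts
  have h1 : (0:ℝ) < (k:ℝ) + 1 := by positivity
  have h2 : (k:ℝ) + 1 < (l:ℝ) + 1 := by exact_mod_cast Nat.add_lt_add_right hkl 1
  have h3 := srad_pos hab
  have h4 := div_lt_div_of_pos_left h3 h1 h2
  linarith

lemma gj_nonneg (j : ℕ) (x : ℝ) : 0 ≤ gj a b j x := by
  unfold gj; split <;> positivity

lemma gj_le (j : ℕ) (x : ℝ) : gj a b j x ≤ (1/2:ℝ)^j := by
  unfold gj; split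
  · exact le_rfl
  · positivity

lemma gj_mono (j : ℕ) : Monotone (gj a b j) := by
  intro u v huv
  unfold gj
  split
  · rw [if_pos (by rename_i h; linarith)]
  · rename_i h
    split
    · positivity
    · exact le_rfl

lemma summable_gj (x : ℝ) : Summable (fun j => gj a b j x) :=
  Summable.of_nonneg_of_le (fun j => gj_nonneg j x) (fun j => gj_le j x)
    (summable_geometric_of_lt_one (by norm_num) (by norm_num))

lemma stair_mono : Monotone (stair a b) := by
  intro u v huv
  exact Summable.tsum_le_tsum (fun j => gj_mono j huv) (summable_gj u) (summable_gj v)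

lemma stair_jump (k : ℕ) {x y : ℝ} (hy : y ≤ pts a b k) (hx : pts a b k < x) :
    stair a b y + (1/2:ℝ)^k ≤ stair a b x := by
  classical
  have hsy := summable_gj (a := a) (b := b) y
  have hsx := summable_gj (a := a) (b := b) x
  have hsi : Summable (fun j => if j = k then (1/2:ℝ)^k else 0) :=
    (hasSum_ite_eq k ((1/2:ℝ)^k)).summable
  have h1 : ∀ j, gj a b j y + (if j = k then (1/2:ℝ)^k else 0) ≤ gj a b j x := by
    intro j
    by_cases hj : j = k
    · subst hj
      have hgy : gj a b j y = 0 := by unfold gj; rw [if_neg (by exact not_lt.mpr hy)]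
      have hgx : gj a b j x = (1/2:ℝ)^j := by unfold gj; rw [if_pos hx]
      simp [hgy, hgx]
    · rw [if_neg hj, add_zero]
      exact gj_mono j (by linarith)
  have h2 := Summable.tsum_le_tsum h1 (hsy.add hsi) hsx
  rw [Summable.tsum_add hsy hsi, tsum_ite_eq] at h2
  exact h2

lemma stair_eventually_const (hab : a < b) {x : ℝ} (hxc : x ≠ midc a b)
    (hxp : ∀ j, x ≠ pts a b j) :
    ∀ᶠ u in nhds x, stair a b u = stair a b x := by
  classical
  set d : ℝ := |x - midc a b| with hd
  have hdpos : 0 < d := abs_pos.mpr (sub_ne_zero.mpr hxc)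
  obtain ⟨J, hJ⟩ := exists_nat_gt (2 * srad a b / d)
  have hJbound : ∀ j, J ≤ j → srad a b / ((j:ℝ)+1) < d/2 := by
    intro j hj
    have h1 : 2 * srad a b / d < (j:ℝ) + 1 := by
      have : (J:ℝ) ≤ (j:ℝ) := by exact_mod_cast hj
      linarith
    have h2 : (0:ℝ) < (j:ℝ) + 1 := by positivity
    rw [div_lt_iff₀ hdpos] at h1
    rw [div_lt_iff₀ h2]
    nlinarith
  set T : Finset ℝ := insert (d/2) ((Finset.range J).image (fun j => |x - pts a b j|)) with hT
  have hTne : T.Nonempty := ⟨d/2, by simp [hT]⟩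
  set δ : ℝ := T.min' hTne with hδ
  have hδpos : 0 < δ := by
    rw [hδ, Finset.lt_min'_iff]
    intro t ht
    rcases Finset.mem_insert.1 ht with rfl | ht
    · linarith
    · obtain ⟨j, _, rfl⟩ := Finset.mem_image.1 ht
      exact abs_pos.mpr (sub_ne_zero.mpr (hxp j))
  have hδd : δ ≤ d / 2 := Finset.min'_le _ _ (by simp [hT])
  have hdist : ∀ j, δ ≤ |x - pts a b j| := by
    intro j
    rcases lt_or_ge j J with hj | hj
    · exact Finset.min'_le _ _ (Finset.mem_insert_of_mem
        (Finset.mem_image.2 ⟨j, Finset.mem_range.mpr hj, rfl⟩))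
    · have hsr := (srad_pos hab).le
      have h1 : |pts a b j - midc a b| < d / 2 := by
        have heq : pts a b j - midc a b = srad a b / ((j:ℝ)+1) := by unfold pts; ring
        rw [heq, abs_of_nonneg (div_nonneg hsr (by positivity))]
        exact hJbound j hj
      have h2 : d ≤ |x - pts a b j| + |pts a b j - midc a b| := by
        calc d = |x - midc a b| := hd
        _ = |(x - pts a b j) + (pts a b j - midc a b)| := by
              rw [show x - midc a b = (x - pts a b j) + (pts a b j - midc a b) by ring]
        _ ≤ _ := abs_add_le _ _
      linarith
  filter_upwards [Metric.ball_mem_nhds x hδpos] with u hu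
  rw [Metric.mem_ball, Real.dist_eq] at hu
  unfold stair
  refine tsum_congr fun j => ?_
  have hj := hdist j
  unfold gj
  rcases lt_or_ge (pts a b j) x with h | h
  · have h2 : pts a b j ≤ x - δ := by
      rw [abs_of_pos (by linarith)] at hj; linarith
    have h3 : pts a b j < u := by
      have h4 : x - u ≤ |u - x| := by rw [abs_sub_comm]; exact le_abs_self _
      linarith
    rw [if_pos h, if_pos h3]
  · have hne : x ≠ pts a b j := hxp j
    have h1 : x < pts a b j := lt_of_le_of_ne h hne
    have h2 : x + δ ≤ pts a b j := by
      rw [abs_of_neg (by linarith)] at hj; linarith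
    have h3 : ¬ pts a b j < u := by
      have : u - x ≤ |u - x| := le_abs_self _
      push_neg
      linarith
    rw [if_neg (not_lt.mpr h), if_neg h3]

lemma stair_continuousAt (hab : a < b) {x : ℝ} (hxc : x ≠ midc a b)
    (hxp : ∀ j, x ≠ pts a b j) :
    ContinuousAt (stair a b) x := by
  have h := stair_eventually_const (a := a) (b := b) hab hxc hxp
  exact Filter.EventuallyEq.continuousAt (h := h)

lemma intervalIntegrable_stair (u v : ℝ) :
    IntervalIntegrable (stair a b) MeasureTheory.volume u v :=
  (stair_mono (a := a) (b := b)).intervalIntegrable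

/-- iterated primitives of the staircase -/
def itf (a b : ℝ) : ℕ → ℝ → ℝ
  | 0 => stair a b
  | (i+1) => fun x => ∫ t in a..x, itf a b i t

lemma cont_itf : ∀ i : ℕ, Continuous (itf a b (i+1)) := by
  intro i
  induction i with
  | zero =>
      exact intervalIntegral.continuous_primitive (fun u v => intervalIntegrable_stair u v) a
  | succ i ih =>
      exact intervalIntegral.continuous_primitive
        (fun u v => ih.intervalIntegrable u v) a

lemma hasDerivAt_itf (i : ℕ) (x : ℝ) :
    HasDerivAt (itf a b (i+2)) (itf a b (i+1) x) x := by
  refine intervalIntegral.integral_hasDerivAt_right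
    ((cont_itf i).intervalIntegrable a x)
    ((cont_itf i).stronglyMeasurableAtFilter _ _)
    (cont_itf i).continuousAt

lemma measurable_stair : Measurable (stair a b) := (stair_mono (a := a) (b := b)).measurable

lemma hasDerivAt_itf1 {x : ℝ} (hx : ContinuousAt (stair a b) x) :
    HasDerivAt (itf a b 1) (stair a b x) x := by
  refine intervalIntegral.integral_hasDerivAt_right
    (intervalIntegrable_stair a x)
    ((measurable_stair (a := a) (b := b)).stronglyMeasurable.stronglyMeasurableAtFilter)
    hx

lemma contDiff_itf : ∀ i : ℕ, ContDiff ℝ i (itf a b (i+1)) := by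
  intro i
  induction i with
  | zero =>
      rw [show ((0:ℕ) : WithTop ℕ∞) = 0 by norm_cast, contDiff_zero]
      exact cont_itf 0
  | succ i ih =>
      have hcast : ((i + 1 : ℕ) : WithTop ℕ∞) = (i : WithTop ℕ∞) + 1 := by push_cast; ring
      rw [hcast, contDiff_succ_iff_deriv]
      refine ⟨fun x => (hasDerivAt_itf i x).differentiableAt, ?_, ?_⟩
      · intro h; exact absurd h (by simp)
      · have hder : deriv (itf a b (i+2)) = itf a b (i+1) :=
          funext fun x => (hasDerivAt_itf i x).deriv
        rw [show i + 1 + 1 = i + 2 by ring, hder]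
        exact ih

lemma itf_descent {B : Set ℝ} (hB : IsOpen B) :
    ∀ i : ℕ, ContDiffOn ℝ ((i+1:ℕ) : WithTop ℕ∞) (itf a b (i+1)) B →
      ContinuousOn (deriv (itf a b 1)) B := by
  intro i
  induction i with
  | zero =>
      intro h
      rw [show ((0+1:ℕ) : WithTop ℕ∞) = (0 : WithTop ℕ∞) + 1 by push_cast; ring,
        contDiffOn_succ_iff_deriv_of_isOpen hB] at h
      exact (contDiffOn_zero).mp h.2.2
  | succ i ih =>
      intro h
      rw [show ((i+1+1:ℕ) : WithTop ℕ∞) = ((i+1:ℕ) : WithTop ℕ∞) + 1 by push_cast; ring,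
        contDiffOn_succ_iff_deriv_of_isOpen hB] at h
      have h2 := h.2.2
      have hder : deriv (itf a b (i+2)) = itf a b (i+1) :=
        funext fun x => (hasDerivAt_itf i x).deriv
      rw [show i + 1 + 1 = i + 2 by ring, hder] at h2
      exact ih h2

end Stair
/-! ### Jump and oscillation witnesses; membership lemmas -/

/-- jump function -/
def jmp (c : ℝ) : ℝ → ℝ := fun x => if c < x then 1 else 0

/-- one-sided oscillation -/
def osc (c : ℝ) : ℝ → ℝ := fun x => if x ≤ c then 0 else Real.sin (x - c)⁻¹

lemma jmp_eq_zero {c x : ℝ} (h : x ≤ c) : jmp c x = 0 := by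
  unfold jmp; rw [if_neg (not_lt.mpr h)]

lemma jmp_eq_one {c x : ℝ} (h : c < x) : jmp c x = 1 := by
  unfold jmp; rw [if_pos h]

lemma osc_eq_zero {c x : ℝ} (h : x ≤ c) : osc c x = 0 := by
  unfold osc; rw [if_pos h]

lemma osc_eq_sin {c x : ℝ} (h : c < x) : osc c x = Real.sin (x - c)⁻¹ := by
  unfold osc; rw [if_neg (not_le.mpr h)]

lemma contDiffAt_jmp (c : ℝ) (k : ℕ) {x : ℝ} (hx : x ≠ c) :
    ContDiffAt ℝ k (jmp c) x := by
  rcases lt_or_gt_of_ne hx with h | h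
  · refine (contDiffAt_const (c := (0:ℝ))).congr_of_eventuallyEq ?_
    filter_upwards [Iio_mem_nhds h] with t ht
    exact jmp_eq_zero (le_of_lt ht)
  · refine (contDiffAt_const (c := (1:ℝ))).congr_of_eventuallyEq ?_
    filter_upwards [Ioi_mem_nhds h] with t ht
    exact jmp_eq_one ht

lemma contDiffAt_osc (c : ℝ) (k : ℕ) {x : ℝ} (hx : x ≠ c) :
    ContDiffAt ℝ k (osc c) x := by
  rcases lt_or_gt_of_ne hx with h | h
  · refine (contDiffAt_const (c := (0:ℝ))).congr_of_eventuallyEq ?_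
    filter_upwards [Iio_mem_nhds h] with t ht
    exact osc_eq_zero (le_of_lt ht)
  · have h1 : ContDiffAt ℝ k (fun t : ℝ => (t - c)⁻¹) x :=
      ((contDiffAt_id.sub (contDiffAt_const (c := c))).inv (sub_ne_zero.mpr (ne_of_gt h)))
    have h2 : ContDiffAt ℝ k (fun t : ℝ => Real.sin (t - c)⁻¹) x :=
      Real.contDiff_sin.contDiffAt.comp x h1
    refine h2.congr_of_eventuallyEq ?_
    filter_upwards [Ioi_mem_nhds h] with t ht
    exact osc_eq_sin ht

/-- regularity off a single point gives piecewise regularity -/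
lemma contDiffReg_off_point {c : ℝ} {f : ℝ → ℝ}
    (h : ∀ (k : ℕ) (x : ℝ), x ≠ c → ContDiffAt ℝ k f x) (R : WithTop ℤ) (a b : ℝ) :
    contDiffReg R f (Set.Icc a b \ (({c} : Finset ℝ) : Set ℝ)) := by
  intro k _
  intro x hx
  have hxc : x ≠ c := by
    intro hh; exact hx.2 (by simp [hh])
  exact (h k x hxc).contDiffWithinAt

lemma mem_CNpw_neg_one {a b : ℝ} (w : Cm1 a b) :
    w ∈ CNpw ((-1 : ℤ) : WithTop ℤ) a b := by
  obtain ⟨f, rfl⟩ := Quotient.exists_rep w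
  refine ⟨f, rfl, ∅, fun k hk => ?_⟩
  exfalso
  have h0 : ((0 : ℤ) : WithTop ℤ) ≤ ((k : ℤ) : WithTop ℤ) := by exact_mod_cast Int.ofNat_nonneg k
  have := h0.trans hk
  exact absurd this (by exact_mod_cast (by norm_num : ¬ ((0:ℤ) ≤ -1)))

lemma mem_CLMN_neg_one {a b : ℝ} (w : Cm1 a b) :
    w ∈ CLMN ((-1 : ℤ) : WithTop ℤ) ((-1 : ℤ) : WithTop ℤ) ((-1 : ℤ) : WithTop ℤ) a b := by
  refine ⟨mem_CNclass_neg_one w, mem_CNpw_neg_one w, ∅, fun x y hax hyb hxy hsub => ?_⟩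
  exact mem_CNclass_neg_one _

/-- The interval condition forces the interval to be on one side of `c`. -/
lemma aux_one_side {a b x y c : ℝ} (hxy : x < y)
    (hsub : Set.Ioo x y ⊆ Set.Ioo a b \ (({c} : Finset ℝ) : Set ℝ)) :
    y ≤ c ∨ c ≤ x := by
  by_contra hcon
  push_neg at hcon
  have hc : c ∈ Set.Ioo x y := ⟨hcon.2, hcon.1⟩
  have := (hsub hc).2
  simp at this

/-- Membership of the jump function. -/
lemma mem_CLMN_jmp {a b : ℝ} (hab : a < b) (M' N' : WithTop ℤ) :
    Cm1.mk a b (jmp (midc a b)) ∈ CLMN ((-1 : ℤ) : WithTop ℤ) M' N' a b := by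
  set c := midc a b with hc
  refine ⟨mem_CNclass_neg_one _, ?_, ?_⟩
  · exact ⟨jmp c, rfl, {c}, contDiffReg_off_point (fun k x hx => contDiffAt_jmp c k hx) N' a b⟩
  · refine ⟨{c}, fun x y hax hyb hxy hsub => ?_⟩
    rw [res_mk]
    rcases aux_one_side hxy hsub with h | h
    · refine ⟨fun _ => 0, ?_, contDiffReg_of_forall (fun k => contDiffOn_const) M'⟩
      refine mk_eq_mk_iff.mpr ⟨∅, fun t ht => ?_⟩
      exact (jmp_eq_zero (le_trans ht.1.2 h)).symm
    · refine ⟨fun _ => 1, ?_, contDiffReg_of_forall (fun k => contDiffOn_const) M'⟩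
      refine mk_eq_mk_iff.mpr ⟨{c}, fun t ht => ?_⟩
      have htc : t ≠ c := by intro hh; exact ht.2 (by simp [hh])
      have : c < t := lt_of_le_of_ne (le_trans h ht.1.1) (Ne.symm htc)
      exact (jmp_eq_one this).symm

/-- Membership of the kink. -/
lemma mem_CLMN_kink {a b : ℝ} (hab : a < b) (m : ℕ) (M' N' : WithTop ℤ) :
    Cm1.mk a b (kink (midc a b) (m+1)) ∈ CLMN ((m : ℤ) : WithTop ℤ) M' N' a b := by
  set c := midc a b with hc
  refine ⟨?_, ?_, ?_⟩
  · exact ⟨kink c (m+1), rfl, contDiffReg_of_contDiff (contDiff_kink c m) le_rfl _⟩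
  · exact ⟨kink c (m+1), rfl, {c},
      contDiffReg_off_point (fun k x hx => contDiffAt_kink c (by omega) k hx) N' a b⟩
  · refine ⟨{c}, fun x y hax hyb hxy hsub => ?_⟩
    rw [res_mk]
    rcases aux_one_side hxy hsub with h | h
    · refine ⟨fun _ => 0, ?_, contDiffReg_of_forall (fun k => contDiffOn_const) M'⟩
      refine mk_eq_mk_iff.mpr ⟨∅, fun t ht => ?_⟩
      exact (kink_eq_zero_of_le c (by omega) (le_trans ht.1.2 h)).symm
    · refine ⟨fun t => (t - c)^(m+1), ?_,
        contDiffReg_of_forall (fun k =>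
          (((contDiff_id.sub (contDiff_const (c := c))).pow (m+1)).contDiffOn)) M'⟩
      refine mk_eq_mk_iff.mpr ⟨∅, fun t ht => ?_⟩
      exact (kink_eq_pow_of_ge c (m+1) (le_trans h ht.1.1)).symm

/-- Membership of the half-power kink. -/
lemma mem_CLMN_rkink {a b : ℝ} (hab : a < b) (m : ℕ) {L' M' : WithTop ℤ} (N' : WithTop ℤ)
    (hL'm : L' ≤ ((m : ℤ) : WithTop ℤ)) (hM'm : M' ≤ ((m : ℤ) : WithTop ℤ)) :
    Cm1.mk a b (rkink (midc a b) ((m : ℝ) + 1/2)) ∈ CLMN L' M' N' a b := by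
  set c := midc a b with hc
  have hcd : ContDiff ℝ m (rkink c ((m : ℝ) + 1/2)) :=
    contDiff_rkink c m _ (by norm_num)
  refine ⟨?_, ?_, ?_⟩
  · exact ⟨_, rfl, contDiffReg_of_contDiff hcd hL'm _⟩
  · exact ⟨_, rfl, {c},
      contDiffReg_off_point (fun k x hx => contDiffAt_rkink c (by positivity) k hx) N' a b⟩
  · refine ⟨∅, fun x y hax hyb hxy hsub => ?_⟩
    rw [res_mk]
    exact ⟨_, rfl, contDiffReg_of_contDiff hcd hM'm _⟩

/-- Membership of the oscillation. -/
lemma mem_CLMN_osc {a b : ℝ} (hab : a < b) (N' : WithTop ℤ) :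
    Cm1.mk a b (osc (midc a b)) ∈
      CLMN ((-1 : ℤ) : WithTop ℤ) ((-1 : ℤ) : WithTop ℤ) N' a b := by
  set c := midc a b with hc
  refine ⟨mem_CNclass_neg_one _, ?_, ?_⟩
  · exact ⟨osc c, rfl, {c}, contDiffReg_off_point (fun k x hx => contDiffAt_osc c k hx) N' a b⟩
  · exact ⟨∅, fun x y hax hyb hxy hsub => mem_CNclass_neg_one _⟩

/-- Membership of the iterated primitive of the staircase. -/
lemma mem_CLMN_itf {a b : ℝ} (hab : a < b) (n : ℕ) {L' M' N' : WithTop ℤ}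
    (hL' : L' ≤ ((n : ℤ) : WithTop ℤ)) (hM' : M' ≤ ((n : ℤ) : WithTop ℤ))
    (hN' : N' ≤ ((n : ℤ) : WithTop ℤ)) :
    Cm1.mk a b (itf a b (n+1)) ∈ CLMN L' M' N' a b := by
  have hcd : ContDiff ℝ n (itf a b (n+1)) := contDiff_itf n
  refine ⟨?_, ?_, ?_⟩
  · exact ⟨_, rfl, contDiffReg_of_contDiff hcd hL' _⟩
  · exact ⟨_, rfl, ∅, contDiffReg_of_contDiff hcd hN' _⟩
  · refine ⟨∅, fun x y hax hyb hxy hsub => ?_⟩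
    rw [res_mk]
    exact ⟨_, rfl, contDiffReg_of_contDiff hcd hM' _⟩
/-! ### Limit value lemmas -/

lemma aux_value_right {g : ℝ → ℝ} {s : Set ℝ} {t v r : ℝ} (htv : t < v) (F : Finset ℝ)
    (hsub : Set.Ioo t v \ (F : Set ℝ) ⊆ s) (hg : ContinuousWithinAt g s t)
    (hval : ∀ u ∈ Set.Ioo t v \ (F : Set ℝ), g u = r) : g t = r := by
  haveI := aux_neBot_Ioo_left htv F
  have h1 : Filter.Tendsto g (nhdsWithin t (Set.Ioo t v \ (F : Set ℝ))) (nhds (g t)) :=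
    hg.tendsto.mono_left (nhdsWithin_mono t hsub)
  have h2 : Filter.Tendsto (fun _ => r) (nhdsWithin t (Set.Ioo t v \ (F : Set ℝ)))
      (nhds (g t)) := by
    refine Filter.Tendsto.congr' ?_ h1
    filter_upwards [self_mem_nhdsWithin] with u hu
    exact hval u hu
  exact (tendsto_nhds_unique h2 tendsto_const_nhds)

lemma aux_value_left {g : ℝ → ℝ} {s : Set ℝ} {t v r : ℝ} (hvt : v < t) (F : Finset ℝ)
    (hsub : Set.Ioo v t \ (F : Set ℝ) ⊆ s) (hg : ContinuousWithinAt g s t)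
    (hval : ∀ u ∈ Set.Ioo v t \ (F : Set ℝ), g u = r) : g t = r := by
  haveI := aux_neBot_Ioo_right hvt F
  have h1 : Filter.Tendsto g (nhdsWithin t (Set.Ioo v t \ (F : Set ℝ))) (nhds (g t)) :=
    hg.tendsto.mono_left (nhdsWithin_mono t hsub)
  have h2 : Filter.Tendsto (fun _ => r) (nhdsWithin t (Set.Ioo v t \ (F : Set ℝ)))
      (nhds (g t)) := by
    refine Filter.Tendsto.congr' ?_ h1
    filter_upwards [self_mem_nhdsWithin] with u hu
    exact hval u hu
  exact (tendsto_nhds_unique h2 tendsto_const_nhds)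

lemma aux_ge_right {g : ℝ → ℝ} {s : Set ℝ} {t v r : ℝ} (htv : t < v) (F : Finset ℝ)
    (hsub : Set.Ioo t v \ (F : Set ℝ) ⊆ s) (hg : ContinuousWithinAt g s t)
    (hval : ∀ u ∈ Set.Ioo t v \ (F : Set ℝ), r ≤ g u) : r ≤ g t := by
  haveI := aux_neBot_Ioo_left htv F
  have h1 : Filter.Tendsto g (nhdsWithin t (Set.Ioo t v \ (F : Set ℝ))) (nhds (g t)) :=
    hg.tendsto.mono_left (nhdsWithin_mono t hsub)
  refine ge_of_tendsto h1 ?_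
  filter_upwards [self_mem_nhdsWithin] with u hu
  exact hval u hu

lemma aux_le_left {g : ℝ → ℝ} {s : Set ℝ} {t v r : ℝ} (hvt : v < t) (F : Finset ℝ)
    (hsub : Set.Ioo v t \ (F : Set ℝ) ⊆ s) (hg : ContinuousWithinAt g s t)
    (hval : ∀ u ∈ Set.Ioo v t \ (F : Set ℝ), g u ≤ r) : g t ≤ r := by
  haveI := aux_neBot_Ioo_right hvt F
  have h1 : Filter.Tendsto g (nhdsWithin t (Set.Ioo v t \ (F : Set ℝ))) (nhds (g t)) :=
    hg.tendsto.mono_left (nhdsWithin_mono t hsub)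
  refine le_of_tendsto h1 ?_
  filter_upwards [self_mem_nhdsWithin] with u hu
  exact hval u hu

/-! ### Non-membership lemmas -/

lemma not_mem_CNclass_jmp {a b : ℝ} (hab : a < b) {L : WithTop ℤ}
    (hL : ((0:ℤ) : WithTop ℤ) ≤ L) : Cm1.mk a b (jmp (midc a b)) ∉ CNclass L a b := by
  set c := midc a b with hc
  have hac := (midc_mem hab).1
  have hcb := (midc_mem hab).2
  rintro ⟨g, hg, hreg⟩
  have hcd := hreg 0 (by exact_mod_cast hL)
  rw [show ((0:ℕ) : WithTop ℕ∞) = 0 by norm_cast, contDiffOn_zero] at hcd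
  obtain ⟨F, hF⟩ := mk_eq_mk_iff.mp hg
  have hcmem : c ∈ Set.Icc a b := ⟨hac.le, hcb.le⟩
  have hgc : ContinuousWithinAt g (Set.Icc a b) c := hcd.continuousWithinAt hcmem
  have h1 : g c = 1 := by
    refine aux_value_right hcb F ?_ hgc ?_
    · intro u hu; exact ⟨hac.le.trans hu.1.1.le, hu.1.2.le⟩
    · intro u hu
      rw [hF u ⟨⟨hac.le.trans hu.1.1.le, hu.1.2.le⟩, hu.2⟩]
      exact jmp_eq_one hu.1.1
  have h2 : g c = 0 := by
    refine aux_value_left hac F ?_ hgc ?_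
    · intro u hu; exact ⟨hu.1.1.le, hu.1.2.le.trans hcb.le⟩
    · intro u hu
      rw [hF u ⟨⟨hu.1.1.le, hu.1.2.le.trans hcb.le⟩, hu.2⟩]
      exact jmp_eq_zero hu.1.2.le
  rw [h1] at h2
  exact one_ne_zero h2

lemma not_mem_CNclass_kink {a b : ℝ} (hab : a < b) (m : ℕ) {L : WithTop ℤ}
    (hL : (((m : ℤ) + 1) : WithTop ℤ) ≤ L) :
    Cm1.mk a b (kink (midc a b) (m+1)) ∉ CNclass L a b := by
  set c := midc a b with hc
  have hac := (midc_mem hab).1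
  have hcb := (midc_mem hab).2
  rintro ⟨g, hg, hreg⟩
  have hcd : ContDiffOn ℝ ((m+1:ℕ) : WithTop ℕ∞) g (Set.Icc a b) := by
    refine hreg (m+1) ?_
    have : (((m+1:ℕ) : ℤ) : WithTop ℤ) = (((m:ℤ)+1) : WithTop ℤ) := by push_cast; ring
    rw [this]; exact hL
  obtain ⟨F, hF⟩ := mk_eq_mk_iff.mp hg
  have hgc : ContinuousOn g (Set.Icc a b) := hcd.continuousOn
  have hkc : ContinuousOn (kink c (m+1)) (Set.Icc a b) :=
    (contDiff_kink c m).continuous.continuousOn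
  have hEq : Set.EqOn g (kink c (m+1)) (Set.Icc a b) :=
    aux_eqOn_Icc hab hgc hkc F (fun t ht => hF t ht)
  have hcd' : ContDiffOn ℝ ((m+1:ℕ) : WithTop ℕ∞) (kink c (m+1)) (Set.Icc a b) :=
    hcd.congr (fun t ht => (hEq ht).symm)
  exact not_contDiffOn_kink hac hcb m (hcd'.mono Set.Ioo_subset_Icc_self)

lemma not_mem_res_rkink {a b : ℝ} (hab : a < b) (m : ℕ) {M : WithTop ℤ}
    (hM : (((m : ℤ) + 1) : WithTop ℤ) ≤ M) {y : ℝ} (hcy : midc a b < y) (hyb : y ≤ b)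
    (hay : a ≤ midc a b) :
    Cm1.res (midc a b) y hay hyb (Cm1.mk a b (rkink (midc a b) ((m:ℝ)+1/2)))
      ∉ CNclass M (midc a b) y := by
  set c := midc a b with hc
  rw [res_mk]
  rintro ⟨g, hg, hreg⟩
  have hcd : ContDiffOn ℝ ((m+1:ℕ) : WithTop ℕ∞) g (Set.Icc c y) := by
    refine hreg (m+1) ?_
    have : (((m+1:ℕ) : ℤ) : WithTop ℤ) = (((m:ℤ)+1) : WithTop ℤ) := by push_cast; ring
    rw [this]; exact hM
  obtain ⟨F, hF⟩ := mk_eq_mk_iff.mp hg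
  have hgc : ContinuousOn g (Set.Icc c y) := hcd.continuousOn
  have hrc : ContinuousOn (rkink c ((m:ℝ)+1/2)) (Set.Icc c y) :=
    (contDiff_rkink c 0 _ (by
      have h1 : (0:ℝ) ≤ (m:ℝ) := Nat.cast_nonneg m
      norm_num; linarith)).continuous.continuousOn
  have hEq : Set.EqOn g (rkink c ((m:ℝ)+1/2)) (Set.Icc c y) :=
    aux_eqOn_Icc hcy hgc hrc F (fun t ht => hF t ht)
  have hcd' : ContDiffOn ℝ ((m+1:ℕ) : WithTop ℕ∞) (rkink c ((m:ℝ)+1/2)) (Set.Icc c y) :=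
    hcd.congr (fun t ht => (hEq ht).symm)
  exact not_contDiffOn_rkink c m hcy hcd'

/-- the value of any continuous representative of `osc` at `c`. -/
lemma osc_res_value {c y : ℝ} (hcy : c < y) {g : ℝ → ℝ}
    (hgc : ContinuousWithinAt g (Set.Icc c y) c) (F : Finset ℝ)
    (hF : Set.EqOn g (osc c) (Set.Icc c y \ (F : Set ℝ))) {θ : ℝ} (hθ : 0 < θ) :
    g c = Real.sin θ := by
  classical
  set u : ℕ → ℝ := fun k => c + (θ + 2*Real.pi*(k:ℝ))⁻¹ with hu
  have hpos : ∀ k : ℕ, 0 < θ + 2*Real.pi*(k:ℝ) := by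
    intro k
    have h1 : (0:ℝ) ≤ (k:ℝ) := Nat.cast_nonneg k
    have h2 := Real.pi_pos
    positivity
  have hgtc : ∀ k, c < u k := by
    intro k
    have := inv_pos.mpr (hpos k)
    rw [hu]; simp only []; linarith
  have htheta : Filter.Tendsto (fun k : ℕ => θ + 2*Real.pi*(k:ℝ)) Filter.atTop Filter.atTop := by
    refine Filter.tendsto_atTop_add_const_left _ θ ?_
    exact Filter.Tendsto.const_mul_atTop (by positivity) tendsto_natCast_atTop_atTop
  have htu : Filter.Tendsto u Filter.atTop (nhds c) := by
    have h1 := htheta.inv_tendsto_atTop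
    have h2 := (tendsto_const_nhds (x := c) (f := Filter.atTop (α := ℕ))).add h1
    simpa using h2
  have hanti : StrictAnti u := by
    intro k l hkl
    have h1 : θ + 2*Real.pi*(k:ℝ) < θ + 2*Real.pi*(l:ℝ) := by
      have : (k:ℝ) < (l:ℝ) := by exact_mod_cast hkl
      have := Real.pi_pos
      nlinarith
    have := one_div_lt_one_div_of_lt (hpos k) h1
    rw [one_div, one_div] at this
    rw [hu]; simp only []; linarith
  have hnotF : ∀ᶠ k in Filter.atTop, u k ∉ (F : Set ℝ) := by
    have hfin : (u ⁻¹' (F : Set ℝ)).Finite :=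
      Set.Finite.preimage (hanti.injective.injOn) F.finite_toSet
    have := Set.Finite.eventually_cofinite_notMem hfin
    rwa [Nat.cofinite_eq_atTop] at this
  have hlty : ∀ᶠ k in Filter.atTop, u k < y := htu.eventually (gt_mem_nhds hcy)
  have hmem : ∀ᶠ k in Filter.atTop, u k ∈ Set.Icc c y \ (F : Set ℝ) := by
    filter_upwards [hnotF, hlty] with k h1 h2
    exact ⟨⟨(hgtc k).le, h2.le⟩, h1⟩
  have htg : Filter.Tendsto (fun k => g (u k)) Filter.atTop (nhds (g c)) := by
    refine hgc.tendsto.comp ?_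
    rw [tendsto_nhdsWithin_iff]
    exact ⟨htu, hmem.mono fun k hk => hk.1⟩
  have hval : ∀ᶠ k in Filter.atTop, g (u k) = Real.sin θ := by
    filter_upwards [hmem] with k hk
    rw [hF hk, osc_eq_sin (hgtc k)]
    have h1 : (u k - c)⁻¹ = θ + 2*Real.pi*(k:ℝ) := by
      rw [hu]; simp only [add_sub_cancel_left]; rw [inv_inv]
    rw [h1]
    have h2 := Real.sin_add_int_mul_two_pi θ (k:ℤ)
    have h3 : θ + 2*Real.pi*(k:ℝ) = θ + ((k:ℤ):ℝ) * (2*Real.pi) := by push_cast; ring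
    rw [h3, h2]
  have hfinal : Filter.Tendsto (fun _ : ℕ => Real.sin θ) Filter.atTop (nhds (g c)) :=
    Filter.Tendsto.congr' hval htg
  exact tendsto_nhds_unique hfinal tendsto_const_nhds

lemma not_mem_res_osc {a b : ℝ} (hab : a < b) {M : WithTop ℤ}
    (hM : ((0:ℤ) : WithTop ℤ) ≤ M) {y : ℝ} (hcy : midc a b < y) (hyb : y ≤ b)
    (hay : a ≤ midc a b) :
    Cm1.res (midc a b) y hay hyb (Cm1.mk a b (osc (midc a b)))
      ∉ CNclass M (midc a b) y := by
  set c := midc a b with hc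
  rw [res_mk]
  rintro ⟨g, hg, hreg⟩
  have hcd := hreg 0 (by exact_mod_cast hM)
  rw [show ((0:ℕ) : WithTop ℕ∞) = 0 by norm_cast, contDiffOn_zero] at hcd
  obtain ⟨F, hF⟩ := mk_eq_mk_iff.mp hg
  have hgc : ContinuousWithinAt g (Set.Icc c y) c :=
    hcd.continuousWithinAt (Set.left_mem_Icc.mpr hcy.le)
  have h1 : g c = Real.sin (Real.pi/2) :=
    osc_res_value hcy hgc F (fun t ht => hF t ht) (by positivity)
  have h2 : g c = Real.sin Real.pi :=
    osc_res_value hcy hgc F (fun t ht => hF t ht) Real.pi_pos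
  rw [Real.sin_pi_div_two] at h1
  rw [Real.sin_pi] at h2
  rw [h1] at h2
  exact one_ne_zero h2

lemma exists_pts_avoid {a b : ℝ} (hab : a < b) (G : Finset ℝ) :
    ∃ k : ℕ, 1 ≤ k ∧ pts a b k ∉ (G : Set ℝ) := by
  have hinj := (pts_strictAnti hab).injective
  have hfin : ((pts a b) ⁻¹' (G : Set ℝ)).Finite :=
    Set.Finite.preimage hinj.injOn G.finite_toSet
  have hfin2 : (((pts a b) ⁻¹' (G : Set ℝ)) ∪ {0}).Finite :=
    hfin.union (Set.finite_singleton 0)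
  obtain ⟨k, hk⟩ := hfin2.infinite_compl.nonempty
  rw [Set.mem_compl_iff, Set.mem_union, not_or] at hk
  refine ⟨k, ?_, hk.1⟩
  have : k ≠ 0 := by intro h; exact hk.2 (by simp [h])
  omega

lemma not_mem_CNpw_stair {a b : ℝ} (hab : a < b) {N : WithTop ℤ}
    (hN : ((0:ℤ) : WithTop ℤ) ≤ N) : Cm1.mk a b (stair a b) ∉ CNpw N a b := by
  rintro ⟨g, hg, E, hreg⟩
  have hcd := hreg 0 (by exact_mod_cast hN)
  rw [show ((0:ℕ) : WithTop ℕ∞) = 0 by norm_cast, contDiffOn_zero] at hcd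
  obtain ⟨F, hF⟩ := mk_eq_mk_iff.mp hg
  obtain ⟨k, hk1, hkEF⟩ := exists_pts_avoid hab (E ∪ F)
  set t := pts a b k with ht
  have htE : t ∉ (E : Set ℝ) := fun h => hkEF (by simp [h])
  have htF : t ∉ (F : Set ℝ) := fun h => hkEF (by simp [h])
  have hta : a < t := pts_gt_a hab k
  have htb : t < b := pts_lt_b hab k
  obtain ⟨w, htw, hwb, hwEF⟩ := aux_right_gap (E ∪ F) htb
  have htmem : t ∈ Set.Icc a b \ (E : Set ℝ) := ⟨⟨hta.le, htb.le⟩, htE⟩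
  have hgt : g t = stair a b t := hF t ⟨⟨hta.le, htb.le⟩, htF⟩
  have hgc : ContinuousWithinAt g (Set.Icc a b \ (E : Set ℝ)) t :=
    hcd.continuousWithinAt htmem
  have hge : stair a b t + (1/2:ℝ)^k ≤ g t := by
    refine aux_ge_right htw (∅ : Finset ℝ) ?_ hgc ?_
    · intro s hs
      have hsE : s ∉ (E : Set ℝ) := fun hh => hwEF s hs.1 (by simp [hh])
      exact ⟨⟨hta.le.trans hs.1.1.le, hs.1.2.le.trans hwb⟩, hsE⟩
    · intro s hs
      have hsF : s ∉ (F : Set ℝ) := fun hh => hwEF s hs.1 (by simp [hh])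
      rw [hF s ⟨⟨hta.le.trans hs.1.1.le, hs.1.2.le.trans hwb⟩, hsF⟩]
      exact stair_jump k le_rfl hs.1.1
  have hpow : (0:ℝ) < (1/2:ℝ)^k := by positivity
  rw [hgt] at hge
  linarith

lemma not_mem_CNpw_itf {a b : ℝ} (hab : a < b) (n : ℕ) {N : WithTop ℤ}
    (hN : (((n : ℤ) + 1) : WithTop ℤ) ≤ N) :
    Cm1.mk a b (itf a b (n+1)) ∉ CNpw N a b := by
  rintro ⟨g, hg, E, hreg⟩
  have hcd : ContDiffOn ℝ ((n+1:ℕ) : WithTop ℕ∞) g (Set.Icc a b \ (E : Set ℝ)) := by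
    refine hreg (n+1) ?_
    have : (((n+1:ℕ) : ℤ) : WithTop ℤ) = (((n:ℤ)+1) : WithTop ℤ) := by push_cast; ring
    rw [this]; exact hN
  obtain ⟨F, hF⟩ := mk_eq_mk_iff.mp hg
  obtain ⟨k, hk1, hkEF⟩ := exists_pts_avoid hab (E ∪ F)
  set t := pts a b k with ht
  have htE : t ∉ (E : Set ℝ) := fun h => hkEF (by simp [h])
  have htF : t ∉ (F : Set ℝ) := fun h => hkEF (by simp [h])
  have hta : a < t := pts_gt_a hab k
  have htb : t < b := pts_lt_b hab k
  have hk1k : pts a b (k+1) < t := pts_strictAnti hab (by omega)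
  have hkk1 : t < pts a b (k-1) := pts_strictAnti hab (by omega)
  obtain ⟨u, hut, huv, huE⟩ := aux_left_gap E hk1k
  obtain ⟨v, htv, hvle, hvE⟩ := aux_right_gap E hkk1
  have hmidu : midc a b < u := lt_of_lt_of_le (pts_gt hab (k+1)) huv
  have hau : a < u := (midc_mem hab).1.trans hmidu
  have hvb : v < b := lt_of_le_of_lt hvle (pts_lt_b hab (k-1))
  have hBIccE : Set.Ioo u v ⊆ Set.Icc a b \ (E : Set ℝ) := by
    intro s hs
    have hsab : s ∈ Set.Icc a b := ⟨(hau.trans hs.1).le, (hs.2.trans hvb).le⟩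
    rcases lt_trichotomy s t with h | h | h
    · exact ⟨hsab, huE s ⟨hs.1, h⟩⟩
    · subst h; exact ⟨hsab, htE⟩
    · exact ⟨hsab, hvE s ⟨h, hs.2⟩⟩
  have hgB : ContDiffOn ℝ ((n+1:ℕ) : WithTop ℕ∞) g (Set.Ioo u v) := hcd.mono hBIccE
  have hgBc : ContinuousOn g (Set.Ioo u v) := hgB.continuousOn
  have hic : ContinuousOn (itf a b (n+1)) (Set.Ioo u v) := (cont_itf n).continuousOn
  have hEqOn : Set.EqOn g (itf a b (n+1)) (Set.Ioo u v) := by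
    refine aux_eqOn_Ioo hgBc hic F ?_
    intro s hs
    exact hF s ⟨(hBIccE hs.1).1, hs.2⟩
  have hicd : ContDiffOn ℝ ((n+1:ℕ) : WithTop ℕ∞) (itf a b (n+1)) (Set.Ioo u v) :=
    hgB.congr (fun s hs => (hEqOn hs).symm)
  have hD : ContinuousOn (deriv (itf a b 1)) (Set.Ioo u v) := itf_descent isOpen_Ioo n hicd
  have htB : t ∈ Set.Ioo u v := ⟨hut, htv⟩
  have hDS : ∀ s ∈ Set.Ioo u v, s ≠ t → deriv (itf a b 1) s = stair a b s := by
    intro s hs hst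
    refine (hasDerivAt_itf1 (stair_continuousAt hab ?_ ?_)).deriv
    · exact ne_of_gt (hmidu.trans hs.1)
    · intro j
      rcases lt_trichotomy j k with hj | hj | hj
      · have : t < pts a b j := pts_strictAnti hab hj
        have hj1 : j ≤ k - 1 := by omega
        have : pts a b (k-1) ≤ pts a b j := (pts_strictAnti hab).antitone hj1
        have : v ≤ pts a b j := le_trans hvle this
        exact ne_of_lt (lt_of_lt_of_le hs.2 this)
      · subst hj; exact hst
      · have hj1 : k + 1 ≤ j := by omega
        have h2 : pts a b j ≤ pts a b (k+1) := (pts_strictAnti hab).antitone hj1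
        have h3 : pts a b j ≤ u := le_trans h2 huv
        exact ne_of_gt (lt_of_le_of_lt h3 hs.1)
  have hDt : ContinuousAt (deriv (itf a b 1)) t :=
    hD.continuousAt (isOpen_Ioo.mem_nhds htB)
  have hDwa : ContinuousWithinAt (deriv (itf a b 1)) Set.univ t := hDt.continuousWithinAt
  have hge : stair a b t + (1/2:ℝ)^k ≤ deriv (itf a b 1) t := by
    refine aux_ge_right htv (∅ : Finset ℝ) (by intro s _; trivial) hDwa ?_
    intro s hs
    have hsB : s ∈ Set.Ioo u v := ⟨hut.trans hs.1.1, hs.1.2⟩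
    rw [hDS s hsB (ne_of_gt hs.1.1)]
    exact stair_jump k le_rfl hs.1.1
  have hle : deriv (itf a b 1) t ≤ stair a b t := by
    refine aux_le_left hut (∅ : Finset ℝ) (by intro s _; trivial) hDwa ?_
    intro s hs
    have hsB : s ∈ Set.Ioo u v := ⟨hs.1.1, hs.1.2.trans htv⟩
    rw [hDS s hsB (ne_of_lt hs.1.2)]
    exact stair_mono hs.1.2.le
  have hpow : (0:ℝ) < (1/2:ℝ)^k := by positivity
  linarith
/-- For a proper interval `[a,b]` and regularity triples
`-1 ≤ L ≤ M ≤ N`, `-1 ≤ L' ≤ M' ≤ N'` in `{-1,0,1,…} ∪ {∞}`,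
`C^{L',M',N'}[a,b] ⊆ C^{L,M,N}[a,b]` if and only if `L ≤ L'`, `M ≤ M'` and `N ≤ N'`. -/
theorem CLMN_subset_iff (a b : ℝ) (hab : a < b)
    (L M N L' M' N' : WithTop ℤ)
    (hL : -1 ≤ L) (hLM : L ≤ M) (hMN : M ≤ N)
    (hL' : -1 ≤ L') (hLM' : L' ≤ M') (hMN' : M' ≤ N') :
    CLMN L' M' N' a b ⊆ CLMN L M N a b ↔ (L ≤ L' ∧ M ≤ M' ∧ N ≤ N') := by
  constructor
  · intro hsub
    have hac := (midc_mem hab).1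
    have hcb := (midc_mem hab).2
    refine ⟨?_, ?_, ?_⟩
    · -- L ≤ L'
      by_contra hcon
      have hlt : L' < L := lt_of_not_ge hcon
      rcases aux_wt_cases hL' with htop | hm1 | ⟨m, hm⟩
      · rw [htop] at hlt; exact not_top_lt hlt
      · have hmem : Cm1.mk a b (jmp (midc a b)) ∈ CLMN L' M' N' a b := by
          rw [hm1]; exact mem_CLMN_jmp hab M' N'
        have h2 := (hsub hmem).1
        rw [hm1] at hlt
        have hL0 : ((0:ℤ) : WithTop ℤ) ≤ L := by
          have := aux_wt_succ_le hlt
          norm_num at this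
          exact this
        exact not_mem_CNclass_jmp hab hL0 h2
      · have hmem : Cm1.mk a b (kink (midc a b) (m+1)) ∈ CLMN L' M' N' a b := by
          rw [hm]; exact mem_CLMN_kink hab m M' N'
        have h2 := (hsub hmem).1
        rw [hm] at hlt
        exact not_mem_CNclass_kink hab m (aux_wt_succ_le hlt) h2
    · -- M ≤ M'
      by_contra hcon
      have hlt : M' < M := lt_of_not_ge hcon
      have hM'0 : -1 ≤ M' := le_trans hL' hLM'
      rcases aux_wt_cases hM'0 with htop | hm1 | ⟨m, hm⟩
      · rw [htop] at hlt; exact not_top_lt hlt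
      · have hL'm1 : L' = ((-1:ℤ) : WithTop ℤ) := by
          refine le_antisymm ?_ ?_
          · rw [← hm1]; exact hLM'
          · rw [aux_neg_one_eq] at hL'; exact hL'
        have hmem : Cm1.mk a b (osc (midc a b)) ∈ CLMN L' M' N' a b := by
          rw [hL'm1, hm1]; exact mem_CLMN_osc hab N'
        obtain ⟨E, hE⟩ := (hsub hmem).2.2
        obtain ⟨y, hcy, hyb', hyE⟩ := aux_right_gap E hcb
        have h3 := hE (midc a b) y hac.le hyb' hcy
          (fun s hs => ⟨⟨hac.trans hs.1, lt_of_lt_of_le hs.2 hyb'⟩, hyE s hs⟩)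
        rw [hm1] at hlt
        have hM0 : ((0:ℤ) : WithTop ℤ) ≤ M := by
          have := aux_wt_succ_le hlt
          norm_num at this
          exact this
        exact not_mem_res_osc hab hM0 hcy hyb' hac.le h3
      · have hmem : Cm1.mk a b (rkink (midc a b) ((m:ℝ)+1/2)) ∈ CLMN L' M' N' a b :=
          mem_CLMN_rkink (L' := L') (M' := M') hab m N' (hm ▸ hLM') (le_of_eq hm)
        obtain ⟨E, hE⟩ := (hsub hmem).2.2
        obtain ⟨y, hcy, hyb', hyE⟩ := aux_right_gap E hcb
        have h3 := hE (midc a b) y hac.le hyb' hcy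
          (fun s hs => ⟨⟨hac.trans hs.1, lt_of_lt_of_le hs.2 hyb'⟩, hyE s hs⟩)
        rw [hm] at hlt
        exact not_mem_res_rkink hab m (aux_wt_succ_le hlt) hcy hyb' hac.le h3
    · -- N ≤ N'
      by_contra hcon
      have hlt : N' < N := lt_of_not_ge hcon
      have hN'0 : -1 ≤ N' := le_trans (le_trans hL' hLM') hMN'
      rcases aux_wt_cases hN'0 with htop | hm1 | ⟨n, hm⟩
      · rw [htop] at hlt; exact not_top_lt hlt
      · have hM'm1 : M' = ((-1:ℤ) : WithTop ℤ) := by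
          refine le_antisymm ?_ ?_
          · rw [← hm1]; exact hMN'
          · rw [aux_neg_one_eq] at hL'; exact le_trans hL' hLM'
        have hL'm1 : L' = ((-1:ℤ) : WithTop ℤ) := by
          refine le_antisymm ?_ ?_
          · rw [← hM'm1]; exact hLM'
          · rw [aux_neg_one_eq] at hL'; exact hL'
        have hmem : Cm1.mk a b (stair a b) ∈ CLMN L' M' N' a b := by
          rw [hL'm1, hM'm1, hm1]; exact mem_CLMN_neg_one _
        have h2 := (hsub hmem).2.1
        rw [hm1] at hlt
        have hN0 : ((0:ℤ) : WithTop ℤ) ≤ N := by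
          have := aux_wt_succ_le hlt
          norm_num at this
          exact this
        exact not_mem_CNpw_stair hab hN0 h2
      · have hmem : Cm1.mk a b (itf a b (n+1)) ∈ CLMN L' M' N' a b :=
          mem_CLMN_itf (L' := L') (M' := M') (N' := N') hab n
            (hm ▸ (hLM'.trans hMN')) (hm ▸ hMN') (le_of_eq hm)
        have h2 := (hsub hmem).2.1
        rw [hm] at hlt
        exact not_mem_CNpw_itf hab n (aux_wt_succ_le hlt) h2
  · rintro ⟨h1, h2, h3⟩
    exact CLMN_anti h1 h2 h3 a b
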